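/- If Γ ⊆ ℤ^{1+d} is a semigroup contained in ℕ×ℤᵈ and Γ_S = Γ, with ∇ the closed cone generated by Γ and Δ its height-1 slice, then for the lattice Λ generated by Γ: limsup_{k→∞} |Γ ∩ ({k}×ℤᵈ)| / kᵈ ≤ vol_Λ(Δ), where vol_Λ is Lebesgue measure normalized so that the slice of Λ at height 1 has covolume 1, assuming Δ is compact. -/

import Mathlib

open MeasureTheory Filter ENNReal Set Pointwise Submodule Module Topology

lemma packing_count {d : ℕ} (b : Basis (Fin d) ℝ (Fin d → ℝ)) (T : Set (Fin d → ℝ))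
    (hT : T.Finite) (hcoset : ∀ x ∈ T, ∀ y ∈ T, x - y ∈ Submodule.span ℤ (Set.range b))
    (U : Set (Fin d → ℝ)) (hU : ∀ x ∈ T, ∀ w ∈ ZSpan.fundamentalDomain b, x + w ∈ U) :
    (T.ncard : ℝ≥0∞) * volume (ZSpan.fundamentalDomain b) ≤ volume U := by
  classical
  set D := ZSpan.fundamentalDomain b with hD
  have hDm : MeasurableSet D := ZSpan.fundamentalDomain_measurableSet b
  have key : ∀ x ∈ T, ∀ y ∈ T, x ≠ y → Disjoint (x +ᵥ D) (y +ᵥ D) := by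
    intro x hx y hy hxy
    rw [Set.disjoint_left]
    rintro v hvx hvy
    obtain ⟨wx, hwx, rfl⟩ : ∃ w ∈ D, v = x + w := by
      obtain ⟨w, hw, hw'⟩ := hvx; exact ⟨w, hw, hw'.symm⟩
    obtain ⟨wy, hwy, hself⟩ : ∃ w ∈ D, x + wx = y + w := by
      obtain ⟨w, hw, hw'⟩ := hvy; exact ⟨w, hw, hw'.symm⟩
    apply hxy
    have h1 : ZSpan.fract b wx = wx := ZSpan.fract_eq_self.2 hwx
    have h2 : ZSpan.fract b wy = wy := ZSpan.fract_eq_self.2 hwy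
    have h3 : ZSpan.fract b wx = ZSpan.fract b wy := by
      rw [ZSpan.fract_eq_fract]
      have heq : -wx + wy = x - y := by
        linear_combination (norm := module) -hself
      rw [heq]
      exact hcoset x hx y hy
    have hw : wx = wy := by rw [← h1, ← h2, h3]
    rw [← hw] at hself
    exact add_right_cancel hself
  have hsub : (⋃ t ∈ hT.toFinset, t +ᵥ D) ⊆ U := by
    intro v hv
    simp only [Set.mem_iUnion] at hv
    obtain ⟨t, ht, hv⟩ := hv
    obtain ⟨w, hw, rfl⟩ := hv
    exact hU t (hT.mem_toFinset.1 ht) w hw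
  calc (T.ncard : ℝ≥0∞) * volume D
      = ∑ t ∈ hT.toFinset, volume (t +ᵥ D) := by
        simp only [measure_vadd]
        rw [Finset.sum_const, nsmul_eq_mul, Set.ncard_eq_toFinset_card _ hT]
    _ = volume (⋃ t ∈ hT.toFinset, t +ᵥ D) := by
        rw [measure_biUnion_finset ?_ (fun t _ => hDm.const_vadd t)]
        intro x hx y hy hxy
        exact key x (hT.mem_toFinset.1 hx) y (hT.mem_toFinset.1 hy) hxy
    _ ≤ volume U := measure_mono hsub

lemma basis_of_M {d : ℕ} (M : Matrix (Fin d) (Fin d) ℝ) (hdet : M.det ≠ 0) :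
    ∃ b : Basis (Fin d) ℝ (Fin d → ℝ),
      volume (ZSpan.fundamentalDomain b) = ENNReal.ofReal |M.det| ∧
      ∀ z : Fin d → ℤ, M.mulVec (fun i => (z i : ℝ)) ∈ Submodule.span ℤ (Set.range b) := by
  classical
  have hinv : Invertible M := M.invertibleOfIsUnitDet (isUnit_iff_ne_zero.2 hdet)
  let e : (Fin d → ℝ) ≃ₗ[ℝ] (Fin d → ℝ) := M.toLinearEquiv' hinv
  have he : ∀ v, e v = M.mulVec v := fun v => rfl
  refine ⟨(Pi.basisFun ℝ (Fin d)).map e, ?_, ?_⟩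
  · rw [ZSpan.volume_fundamentalDomain]
    congr 1
    have : (Matrix.of ⇑((Pi.basisFun ℝ (Fin d)).map e)) = M.transpose := by
      ext i j
      simp [Matrix.of_apply, Basis.map_apply, he, Pi.basisFun_apply, Matrix.mulVec_single,
        Matrix.transpose_apply]
    rw [this, Matrix.det_transpose]
  · intro z
    rw [Basis.mem_span_iff_repr_mem]
    intro i
    rw [Basis.map_repr]
    simp only [LinearEquiv.trans_apply]
    have h2 : e.symm (M.mulVec fun i => (z i : ℝ)) = fun i => (z i : ℝ) := by
      rw [← he]; exact e.symm_apply_apply _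
    rw [h2]
    simp only [Pi.basisFun_repr]
    exact ⟨z i, rfl⟩

set_option maxHeartbeats 2000000 in
lemma singular_count {d : ℕ} (W : Submodule ℝ (Fin d → ℝ)) (hW : W ≠ ⊤) :
    ∃ C : ℝ, 0 < C ∧ ∀ (T : Set (Fin d → ℝ)) (ρ : ℝ), 1 ≤ ρ →
      (∀ x ∈ T, ∀ y ∈ T, ((∃ z : Fin d → ℤ, x - y = fun i => (z i : ℝ)) ∧ x - y ∈ W)) →
      (∀ x ∈ T, ‖x‖ ≤ ρ) → (T.ncard : ℝ) ≤ C * ρ ^ (d - 1) := by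
  classical
  -- the subgroup of integer vectors in W
  set G : Set (Fin d → ℝ) := {v | (∃ z : Fin d → ℤ, v = fun i => (z i : ℝ)) ∧ v ∈ W} with hG
  set H : Submodule ℤ (Fin d → ℝ) := Submodule.span ℤ G with hH
  have hHint : (H : Set (Fin d → ℝ)) ⊆
      (Submodule.span ℤ (Set.range (Pi.basisFun ℝ (Fin d))) : Set (Fin d → ℝ)) := by
    rw [hH]
    apply Submodule.span_le.2
    rintro v ⟨⟨z, rfl⟩, -⟩
    rw [SetLike.mem_coe, Basis.mem_span_iff_repr_mem]
    intro i
    simp only [Pi.basisFun_repr]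
    exact ⟨z i, rfl⟩
  have hHW : (H : Set (Fin d → ℝ)) ⊆ (W.restrictScalars ℤ : Set (Fin d → ℝ)) := by
    rw [hH]; apply Submodule.span_le.2; rintro v ⟨-, hv⟩; exact hv
  have hdisc : DiscreteTopology H := by
    have : DiscreteTopology (Submodule.span ℤ (Set.range (Pi.basisFun ℝ (Fin d)))) := by
      infer_instance
    exact DiscreteTopology.of_subset this hHint
  -- ambient real span
  set E' : Submodule ℝ (Fin d → ℝ) := Submodule.span ℝ (H : Set (Fin d → ℝ)) with hE'
  have hE'W : E' ≤ W := Submodule.span_le.2 (by intro v hv; exact hHW hv)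
  have hrankE' : finrank ℝ E' < d := by
    have h1 : finrank ℝ E' ≤ finrank ℝ W := Submodule.finrank_mono hE'W
    have h2 : finrank ℝ W < finrank ℝ (Fin d → ℝ) :=
      Submodule.finrank_lt hW
    have h3 : finrank ℝ (Fin d → ℝ) = d := by
      simp [Module.finrank_fintype_fun_eq_card]
    omega
  set H'' : Submodule ℤ ↥E' := ZLattice.comap ℝ H E'.subtype with hH''
  have hdisc'' : DiscreteTopology H'' :=
    ZLattice.comap_discreteTopology ℝ H continuous_subtype_val Subtype.val_injective
  have hzl : IsZLattice ℝ H'' := by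
    constructor
    rw [hH'', ZLattice.coe_comap]
    have h0 : Submodule.span ℝ (E'.subtype ⁻¹' (H : Set (Fin d → ℝ)))
        = (Submodule.span ℝ (H : Set (Fin d → ℝ))).comap E'.subtype :=
      Submodule.span_preimage_eq (Submodule.nonempty H)
        (by rw [Submodule.range_subtype]; exact Submodule.subset_span)
    rw [h0, ← hE']
    ext x
    simp [Submodule.mem_comap, x.2]
  have hfree : Module.Free ℤ H'' := ZLattice.module_free ℝ H''
  have hfin : Module.Finite ℤ H'' := ZLattice.module_finite ℝ H''
  set b := Module.Free.chooseBasis ℤ H'' with hb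
  set ι := Module.Free.ChooseBasisIndex ℤ H'' with hι
  have hcard : Fintype.card ι ≤ d - 1 := by
    have h1 : Fintype.card ι = finrank ℤ H'' := (finrank_eq_card_chooseBasisIndex ℤ _).symm
    have h2 : finrank ℤ H'' = finrank ℝ E' := ZLattice.rank ℝ H''
    omega
  set B := b.ofZLatticeBasis ℝ H'' with hB
  set C₀ : ℝ := 1 + ∑ i, ‖LinearMap.toContinuousLinearMap (B.coord i)‖ with hC₀
  have hC₀pos : 0 < C₀ := by
    have : (0:ℝ) ≤ ∑ i, ‖LinearMap.toContinuousLinearMap (B.coord i)‖ :=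
      Finset.sum_nonneg fun i _ => ContinuousLinearMap.opNorm_nonneg _
    linarith
  have hC₀i : ∀ i : ι, ‖LinearMap.toContinuousLinearMap (B.coord i)‖ ≤ C₀ := by
    intro i
    have := Finset.single_le_sum (f := fun i => ‖LinearMap.toContinuousLinearMap (B.coord i)‖)
      (fun i _ => ContinuousLinearMap.opNorm_nonneg _) (Finset.mem_univ i)
    linarith
  refine ⟨(4*C₀+3)^d, by positivity, ?_⟩
  intro T ρ hρ hcoset hbound
  rcases T.eq_empty_or_nonempty with rfl | ⟨t₀, ht₀⟩
  · simp; positivity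
  set N : ℕ := ⌈2*C₀*ρ⌉₊ with hN
  -- the injection into integer coordinates
  have hmemH : ∀ t ∈ T, t - t₀ ∈ H := by
    intro t ht
    exact Submodule.subset_span (hcoset t ht t₀ ht₀)
  have hmemE' : ∀ t ∈ T, t - t₀ ∈ E' := fun t ht => Submodule.subset_span (hmemH t ht)
  set φ : (Fin d → ℝ) → (ι → ℤ) := fun t =>
    if h : t ∈ T then (fun i => b.repr ⟨⟨t - t₀, hmemE' t h⟩, by
      rw [hH'', ZLattice.comap, Submodule.mem_comap]; exact hmemH t h⟩ i)
    else 0 with hφ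
  have hφmem : ∀ t ∈ T, φ t ∈ Finset.Icc (fun _ : ι => -(N:ℤ)) (fun _ => (N:ℤ)) := by
    intro t ht
    rw [Finset.mem_Icc]
    have key : ∀ i, |φ t i| ≤ (N : ℤ) := by
      intro i
      rw [hφ]
      simp only [ht, dif_pos]
      set v : H'' := ⟨⟨t - t₀, hmemE' t ht⟩, by
        rw [hH'', ZLattice.comap, Submodule.mem_comap]; exact hmemH t ht⟩ with hv
      have h1 : ((b.repr v i : ℤ) : ℝ) = B.repr (v : ↥E') i := by
        rw [hB, Basis.ofZLatticeBasis_repr_apply]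
      have h2 : |(B.repr (v : ↥E') i)| ≤ C₀ * ‖(v : ↥E')‖ := by
        rw [← Basis.coord_apply, ← LinearMap.coe_toContinuousLinearMap' (B.coord i)]
        calc |LinearMap.toContinuousLinearMap (B.coord i) (v : ↥E')|
            ≤ ‖LinearMap.toContinuousLinearMap (B.coord i)‖ * ‖(v : ↥E')‖ :=
              (LinearMap.toContinuousLinearMap (B.coord i)).le_opNorm _
          _ ≤ C₀ * ‖(v : ↥E')‖ := by
              apply mul_le_mul_of_nonneg_right (hC₀i i) (norm_nonneg _)
      have h4 : ‖(v : ↥E')‖ ≤ 2*ρ := by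
        have : ‖(v : ↥E')‖ = ‖t - t₀‖ := rfl
        rw [this]
        calc ‖t - t₀‖ ≤ ‖t‖ + ‖t₀‖ := norm_sub_le _ _
          _ ≤ ρ + ρ := add_le_add (hbound t ht) (hbound t₀ ht₀)
          _ = 2*ρ := by ring
      have h5 : |((b.repr v i : ℤ) : ℝ)| ≤ 2*C₀*ρ := by
        rw [h1]
        calc |(B.repr (v : ↥E') i)| ≤ C₀ * ‖(v : ↥E')‖ := h2
          _ ≤ C₀ * (2*ρ) := by
              apply mul_le_mul_of_nonneg_left h4 (le_of_lt hC₀pos)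
          _ = 2*C₀*ρ := by ring
      have h6 : (2*C₀*ρ : ℝ) ≤ (N : ℝ) := Nat.le_ceil _
      have h10 : |((b.repr v i : ℤ) : ℝ)| ≤ (N:ℝ) := le_trans h5 h6
      exact_mod_cast h10
    constructor <;> intro i
    · exact (abs_le.1 (key i)).1
    · exact (abs_le.1 (key i)).2
  have hφinj : Set.InjOn φ T := by
    intro t ht t' ht' heq
    rw [hφ] at heq
    simp only [ht, ht', dif_pos] at heq
    have : (⟨⟨t - t₀, hmemE' t ht⟩, by
        rw [hH'', ZLattice.comap, Submodule.mem_comap]; exact hmemH t ht⟩ : H'') =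
        ⟨⟨t' - t₀, hmemE' t' ht'⟩, by
        rw [hH'', ZLattice.comap, Submodule.mem_comap]; exact hmemH t' ht'⟩ := by
      apply b.repr.injective
      ext i
      exact congrFun heq i
    have h7 : t - t₀ = t' - t₀ := by
      have := congrArg (fun x : H'' => ((x : ↥E') : Fin d → ℝ)) this
      exact this
    exact sub_left_injective h7
  have hcount : T.ncard ≤ (Finset.Icc (fun _ : ι => -(N:ℤ)) (fun _ => (N:ℤ))).card := by
    rw [← Set.ncard_coe_finset]
    exact Set.ncard_le_ncard_of_injOn φ hφmem hφinj (Finset.finite_toSet _)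
  have hIccCard : (Finset.Icc (fun _ : ι => -(N:ℤ)) (fun _ => (N:ℤ))).card
      = (2*N+1) ^ Fintype.card ι := by
    rw [Pi.card_Icc]
    simp only [Int.card_Icc]
    rw [Finset.prod_const]
    congr 1
    omega
  have hfinal : (T.ncard : ℝ) ≤ ((2*N+1 : ℕ) : ℝ) ^ Fintype.card ι := by
    have h11 := hcount.trans hIccCard.le
    exact_mod_cast h11
  have hNbound : ((2*N+1 : ℕ) : ℝ) ≤ (4*C₀+3) * ρ := by
    have h8 : (N : ℝ) ≤ 2*C₀*ρ + 1 := by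
      have := Nat.ceil_lt_add_one (by positivity : (0:ℝ) ≤ 2*C₀*ρ)
      linarith
    push_cast
    nlinarith
  calc (T.ncard : ℝ) ≤ ((2*N+1 : ℕ) : ℝ) ^ Fintype.card ι := hfinal
    _ ≤ ((4*C₀+3) * ρ) ^ Fintype.card ι := by
        apply pow_le_pow_left₀ (by positivity) hNbound
    _ = (4*C₀+3) ^ Fintype.card ι * ρ ^ Fintype.card ι := mul_pow _ _ _
    _ ≤ (4*C₀+3)^d * ρ ^ (d-1) := by
        apply _root_.mul_le_mul
        · apply pow_le_pow_right₀ (by linarith) (by omega)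
        · apply pow_le_pow_right₀ hρ hcard
        · positivity
        · positivity


/-- The embedding of the lattice `ℤ × ℤᵈ` into `ℝ × ℝᵈ`. -/
def latticeEmb (d : ℕ) (x : ℤ × (Fin d → ℤ)) : ℝ × (Fin d → ℝ) :=
  ((x.1 : ℝ), fun i => (x.2 i : ℝ))

theorem stmt_16 (d : ℕ) (Γ : Set (ℤ × (Fin d → ℤ)))
    (hadd : ∀ x ∈ Γ, ∀ y ∈ Γ, x + y ∈ Γ)
    (hpos : ∀ x ∈ Γ, 0 ≤ x.1)
    -- `Λ` is the subgroup generated by `Γ`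
    (Λ : AddSubgroup (ℤ × (Fin d → ℤ))) (hΛ : Λ = AddSubgroup.closure Γ)
    -- `M` is a matrix whose columns span (over `ℤ`) the direction lattice of `Λ`
    (M : Matrix (Fin d) (Fin d) ℝ)
    (hM : ∀ w : Fin d → ℤ, ((0 : ℤ), w) ∈ Λ ↔
      ∃ z : Fin d → ℤ, (fun i => (w i : ℝ)) = M.mulVec (fun i => (z i : ℝ)))
    -- `∇` is the closed convex cone generated by `Γ`
    (nabla : Set (ℝ × (Fin d → ℝ)))
    (hnabla : nabla = closure {v | ∃ t : ℝ, 0 ≤ t ∧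
      ∃ w ∈ convexHull ℝ (latticeEmb d '' Γ), v = t • w})
    -- `Δ` is the slice of `∇` at height 1, assumed compact
    (Δ : Set (Fin d → ℝ)) (hΔ : Δ = {x | ((1 : ℝ), x) ∈ nabla})
    (hΔcompact : IsCompact Δ) :
    limsup (fun k : ℕ => ({x ∈ Γ | x.1 = (k : ℤ)}.ncard : ℝ≥0∞) / (k : ℝ≥0∞) ^ d)
      atTop ≤ volume Δ / ENNReal.ofReal |M.det| := by
  classical
  set f : (ℤ × (Fin d → ℤ)) → (Fin d → ℝ) := fun x => (fun i => (x.2 i : ℝ)) with hf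
  set S : ℕ → Set (ℤ × (Fin d → ℤ)) := fun k => {x ∈ Γ | x.1 = (k:ℤ)} with hS
  set u : ℕ → ℝ≥0∞ := fun k => ((S k).ncard : ℝ≥0∞) / (k : ℝ≥0∞) ^ d with hu
  obtain ⟨R₀, hR₀⟩ := hΔcompact.isBounded.subset_closedBall 0
  set R : ℝ := max R₀ 1 with hR
  have hR1 : (1:ℝ) ≤ R := le_max_right _ _
  have hRΔ : Δ ⊆ Metric.closedBall 0 R :=
    hR₀.trans (Metric.closedBall_subset_closedBall (le_max_left _ _))
  have hΓΛ : Γ ⊆ (Λ : Set _) := by rw [hΛ]; exact AddSubgroup.subset_closure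
  -- differences of elements at the same height
  have hdiff : ∀ k : ℕ, ∀ x ∈ S k, ∀ y ∈ S k, ∃ z : Fin d → ℤ,
      f x - f y = M.mulVec (fun i => (z i : ℝ)) := by
    intro k x hx y hy
    have hxy : x - y ∈ Λ := sub_mem (hΓΛ hx.1) (hΓΛ hy.1)
    have h0 : ((0:ℤ), x.2 - y.2) ∈ Λ := by
      have he : x - y = ((0:ℤ), x.2 - y.2) := by
        rw [Prod.ext_iff]
        refine ⟨?_, rfl⟩
        show x.1 - y.1 = 0
        rw [hx.2, hy.2]; ring
      rwa [he] at hxy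
    obtain ⟨z, hz⟩ := (hM (x.2 - y.2)).1 h0
    refine ⟨z, ?_⟩
    rw [← hz]
    funext i
    simp [hf]
  -- points at height k, rescaled, lie in Δ
  have hslice : ∀ k : ℕ, 1 ≤ k → ∀ x ∈ S k, ∃ δ ∈ Δ, f x = (k:ℝ) • δ := by
    intro k hk x hx
    have hk0 : ((k:ℝ)) ≠ 0 := by positivity
    refine ⟨((k:ℝ))⁻¹ • f x, ?_, (smul_inv_smul₀ hk0 _).symm⟩
    rw [hΔ]
    show ((1:ℝ), (k:ℝ)⁻¹ • f x) ∈ nabla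
    rw [hnabla]
    apply subset_closure
    refine ⟨((k:ℝ))⁻¹, by positivity, latticeEmb d x,
      subset_convexHull ℝ _ ⟨x, hx.1, rfl⟩, ?_⟩
    have hx1 : (x.1 : ℝ) = (k:ℝ) := by
      have := hx.2
      push_cast [this]
      norm_num
    rw [Prod.ext_iff]
    constructor
    · show (1:ℝ) = ((k:ℝ))⁻¹ • (x.1 : ℝ)
      rw [hx1, smul_eq_mul, inv_mul_cancel₀ hk0]
    · rfl
  -- norm bound
  have hnorm : ∀ k : ℕ, 1 ≤ k → ∀ x ∈ S k, ‖f x‖ ≤ R * k := by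
    intro k hk x hx
    obtain ⟨δ, hδ, hfx⟩ := hslice k hk x hx
    rw [hfx, norm_smul]
    have h1 : ‖δ‖ ≤ R := by
      have := hRΔ hδ
      rwa [Metric.mem_closedBall, dist_zero_right] at this
    have h2 : ‖(k:ℝ)‖ = (k:ℝ) := by
      rw [Real.norm_eq_abs, abs_of_nonneg (by positivity)]
    rw [h2]
    calc (k:ℝ) * ‖δ‖ ≤ (k:ℝ) * R := by
          apply mul_le_mul_of_nonneg_left h1 (by positivity)
      _ = R * k := by ring
  -- injectivity of f on S k
  have hinj : ∀ k : ℕ, Set.InjOn f (S k) := by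
    intro k x hx y hy hxy
    have h2 : x.2 = y.2 := by
      funext i
      have h3 : ((x.2 i : ℝ)) = (y.2 i : ℝ) := congrFun hxy i
      exact_mod_cast h3
    have h1 : x.1 = y.1 := by rw [hx.2, hy.2]
    exact Prod.ext h1 h2
  -- finiteness
  have hfin : ∀ k : ℕ, 1 ≤ k → (S k).Finite := by
    intro k hk
    have himfin : (Prod.snd '' (S k)).Finite := by
      apply Set.Finite.subset (Set.finite_Icc
        (fun _ : Fin d => -(⌈R*k⌉ : ℤ)) (fun _ => (⌈R*k⌉ : ℤ)))
      rintro w ⟨x, hx, rfl⟩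
      have hb : ∀ i, |x.2 i| ≤ (⌈R*k⌉ : ℤ) := by
        intro i
        have h1 : |(x.2 i : ℝ)| = |f x i| := by simp [hf]
        have h2 : |f x i| ≤ ‖f x‖ := by
          have := norm_le_pi_norm (f x) i
          rwa [Real.norm_eq_abs] at this
        have h3 : |(x.2 i : ℝ)| ≤ R * k := by rw [h1]; exact h2.trans (hnorm k hk x hx)
        have h4 : (R*k : ℝ) ≤ (⌈R*k⌉ : ℤ) := Int.le_ceil _
        exact_mod_cast h3.trans h4
      rw [Set.mem_Icc]
      constructor <;> intro i
      · exact (abs_le.1 (hb i)).1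
      · exact (abs_le.1 (hb i)).2
    apply Set.Finite.of_finite_image (himfin.subset (Set.image_mono (le_refl _)))
    intro x hx y hy hxy
    exact Prod.ext (by rw [hx.2, hy.2]) hxy
  have hTcard : ∀ k : ℕ, (f '' S k).ncard = (S k).ncard := fun k =>
    Set.ncard_image_of_injOn (hinj k)
  -- case on the determinant
  by_cases hdet : M.det = 0
  · -- singular case
    rcases Nat.eq_zero_or_pos d with hd0 | hd1
    · exfalso; subst hd0; rw [Matrix.det_fin_zero] at hdet; norm_num at hdet
    by_cases hΔvol : volume Δ = 0
    swap
    · rw [hdet]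
      simp only [abs_zero, ENNReal.ofReal_zero]
      rw [ENNReal.div_zero hΔvol]
      exact le_top
    rw [hdet]
    simp only [abs_zero, ENNReal.ofReal_zero, hΔvol, ENNReal.zero_div]
    show limsup u atTop ≤ 0
    set W : Submodule ℝ (Fin d → ℝ) := LinearMap.range (Matrix.toLin' M) with hW
    have hWne : W ≠ ⊤ := by
      intro htop
      obtain ⟨v, hv0, hv⟩ := (Matrix.exists_mulVec_eq_zero_iff).2 hdet
      have hsurj : Function.Surjective (Matrix.toLin' M) := LinearMap.range_eq_top.1 htop
      have hinj2 : Function.Injective (Matrix.toLin' M) :=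
        (LinearMap.injective_iff_surjective).2 hsurj
      apply hv0
      apply hinj2
      rw [map_zero, Matrix.toLin'_apply]
      exact hv
    obtain ⟨C, hCpos, hcount⟩ := singular_count W hWne
    have hub : ∀ k : ℕ, 1 ≤ k → u k ≤ ENNReal.ofReal (C * R^(d-1)) / (k:ℝ≥0∞) := by
      intro k hk
      have hk0 : ((k:ℝ≥0∞)) ≠ 0 := by
        simp only [ne_eq, Nat.cast_eq_zero]; omega
      have hkt : ((k:ℝ≥0∞)) ≠ ⊤ := ENNReal.natCast_ne_top k
      have hρ : (1:ℝ) ≤ R * k := by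
        calc (1:ℝ) ≤ R := hR1
          _ = R * 1 := by ring
          _ ≤ R * k := by
              apply mul_le_mul_of_nonneg_left ?_ (by positivity)
              exact_mod_cast hk
      have hcnt : ((S k).ncard : ℝ) ≤ C * (R*k)^(d-1) := by
        rw [← hTcard k]
        apply hcount (f '' S k) (R*k) hρ
        · rintro x' ⟨x, hx, rfl⟩ y' ⟨y, hy, rfl⟩
          constructor
          · refine ⟨x.2 - y.2, ?_⟩
            funext i
            simp [hf]
          · obtain ⟨z, hz⟩ := hdiff k x hx y hy
            rw [hz]
            exact ⟨(fun i => (z i : ℝ)), by rw [Matrix.toLin'_apply]⟩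
        · rintro x' ⟨x, hx, rfl⟩
          exact hnorm k hk x hx
      have h1 : ((S k).ncard : ℝ≥0∞) ≤ ENNReal.ofReal (C * (R*k)^(d-1)) := by
        rw [← ENNReal.ofReal_natCast]
        exact ENNReal.ofReal_le_ofReal hcnt
      have h3 : ENNReal.ofReal (C * (R*(k:ℝ))^(d-1))
          = ENNReal.ofReal (C * R^(d-1)) * (k:ℝ≥0∞)^(d-1) := by
        rw [mul_pow, ← mul_assoc, ENNReal.ofReal_mul (by positivity),
          ENNReal.ofReal_pow (by positivity), ENNReal.ofReal_natCast]
      have h4 : (k:ℝ≥0∞)^(d-1) / (k:ℝ≥0∞)^d = 1 / (k:ℝ≥0∞) := by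
        calc (k:ℝ≥0∞)^(d-1) / (k:ℝ≥0∞)^d
            = (k:ℝ≥0∞)^(d-1) * 1 / ((k:ℝ≥0∞)^(d-1) * (k:ℝ≥0∞)) := by
              rw [mul_one]
              congr 1
              rw [← pow_succ]
              congr 1
              omega
          _ = 1 / (k:ℝ≥0∞) := ENNReal.mul_div_mul_left _ _ (pow_ne_zero _ hk0)
              (ENNReal.pow_ne_top hkt)
      calc u k ≤ ENNReal.ofReal (C * (R*(k:ℝ))^(d-1)) / (k:ℝ≥0∞)^d :=
            ENNReal.div_le_div_right h1 _
        _ = ENNReal.ofReal (C * R^(d-1)) * ((k:ℝ≥0∞)^(d-1) / (k:ℝ≥0∞)^d) := by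
            rw [h3, mul_div_assoc]
        _ = ENNReal.ofReal (C * R^(d-1)) * (1 / (k:ℝ≥0∞)) := by rw [h4]
        _ = ENNReal.ofReal (C * R^(d-1)) / (k:ℝ≥0∞) := by rw [mul_one_div]
    have htend : Tendsto (fun k : ℕ => ENNReal.ofReal (C * R^(d-1)) / (k:ℝ≥0∞))
        atTop (𝓝 0) := by
      have h5 : Tendsto (fun k : ℕ => ((k:ℝ≥0∞))⁻¹) atTop (𝓝 0) :=
        ENNReal.tendsto_inv_nat_nhds_zero
      have h6 := ENNReal.Tendsto.const_mul (a := ENNReal.ofReal (C * R^(d-1))) h5 (Or.inr ENNReal.ofReal_ne_top)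
      rw [mul_zero] at h6
      simpa [div_eq_mul_inv] using h6
    have hle : limsup u atTop ≤
        limsup (fun k : ℕ => ENNReal.ofReal (C * R^(d-1)) / (k:ℝ≥0∞)) atTop := by
      exact limsup_le_limsup
        (by filter_upwards [eventually_ge_atTop 1] with k hk using hub k hk)
        (by isBoundedDefault) (by isBoundedDefault)
    rwa [htend.limsup_eq] at hle
  · -- nonsingular case
    obtain ⟨b, hbvol, hbspan⟩ := basis_of_M M hdet
    set D := ZSpan.fundamentalDomain b with hD
    obtain ⟨Cb, hCb⟩ := (ZSpan.fundamentalDomain_isBounded b).subset_closedBall 0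
    have hdet' : ENNReal.ofReal |M.det| ≠ 0 := by
      rw [ne_eq, ENNReal.ofReal_eq_zero, not_le]
      exact abs_pos.2 hdet
    have hfr : finrank ℝ (Fin d → ℝ) = d := by
      rw [Module.finrank_fintype_fun_eq_card, Fintype.card_fin]
    show limsup u atTop ≤ volume Δ / ENNReal.ofReal |M.det|
    have hstep : ∀ ε : ℝ, 0 < ε → limsup u atTop ≤
        volume (Metric.cthickening ε Δ) / ENNReal.ofReal |M.det| := by
      intro ε hε
      apply limsup_le_of_le (by isBoundedDefault)
      filter_upwards [eventually_ge_atTop (max 1 ⌈Cb/ε⌉₊)] with k hk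
      have hk1 : 1 ≤ k := le_trans (le_max_left _ _) hk
      have hk0' : ((k:ℝ)) ≠ 0 := by positivity
      have hkC : Cb / ε ≤ (k:ℝ) := by
        calc (Cb/ε : ℝ) ≤ (⌈Cb/ε⌉₊ : ℝ) := Nat.le_ceil _
          _ ≤ (k:ℝ) := by exact_mod_cast le_trans (le_max_right _ _) hk
      have hCbk : Cb ≤ (k:ℝ) * ε := by
        rw [div_le_iff₀ hε] at hkC
        linarith
      have hpack := packing_count b (f '' S k) ((hfin k hk1).image f) ?_
        ((k:ℝ) • Metric.cthickening ε Δ) ?_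
      · -- conclude from packing
        have hvol : volume ((k:ℝ) • Metric.cthickening ε Δ)
            = (k:ℝ≥0∞)^d * volume (Metric.cthickening ε Δ) := by
          rw [Measure.addHaar_smul_of_nonneg volume (by positivity) _, hfr]
          congr 1
          rw [ENNReal.ofReal_pow (by positivity), ENNReal.ofReal_natCast]
        rw [hTcard k, hbvol] at hpack
        show u k ≤ volume (Metric.cthickening ε Δ) / ENNReal.ofReal |M.det|
        rw [hu]
        rw [ENNReal.div_le_iff_le_mul (Or.inl (pow_ne_zero _ ?_)) (Or.inl (ENNReal.pow_ne_top (ENNReal.natCast_ne_top k)))]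
        swap
        · simp only [ne_eq, Nat.cast_eq_zero]; omega
        have hrearr : volume (Metric.cthickening ε Δ) / ENNReal.ofReal |M.det| * (k:ℝ≥0∞)^d
            = volume (Metric.cthickening ε Δ) * (k:ℝ≥0∞)^d / ENNReal.ofReal |M.det| := by
          rw [div_eq_mul_inv, div_eq_mul_inv, mul_right_comm]
        rw [hrearr, ENNReal.le_div_iff_mul_le (Or.inl hdet') (Or.inl ENNReal.ofReal_ne_top)]
        calc ((S k).ncard : ℝ≥0∞) * ENNReal.ofReal |M.det|
            ≤ volume ((k:ℝ) • Metric.cthickening ε Δ) := hpack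
          _ = (k:ℝ≥0∞)^d * volume (Metric.cthickening ε Δ) := hvol
          _ = volume (Metric.cthickening ε Δ) * (k:ℝ≥0∞)^d := mul_comm _ _
      · -- coset condition
        rintro x' ⟨x, hx, rfl⟩ y' ⟨y, hy, rfl⟩
        obtain ⟨z, hz⟩ := hdiff k x hx y hy
        rw [hz]
        exact hbspan z
      · -- union condition
        rintro x' ⟨x, hx, rfl⟩ w hw
        obtain ⟨δ, hδ, hfx⟩ := hslice k hk1 x hx
        have hwCb : ‖w‖ ≤ Cb := by
          have := hCb hw
          rwa [Metric.mem_closedBall, dist_zero_right] at this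
        refine ⟨δ + ((k:ℝ))⁻¹ • w, ?_, ?_⟩
        · apply Metric.mem_cthickening_of_dist_le _ δ ε Δ hδ ?_
          rw [dist_eq_norm, add_sub_cancel_left, norm_smul, norm_inv,
            Real.norm_natCast]
          calc ((k:ℝ))⁻¹ * ‖w‖ ≤ ((k:ℝ))⁻¹ * Cb := by
                apply mul_le_mul_of_nonneg_left hwCb (by positivity)
            _ ≤ ε := by
                rw [inv_mul_le_iff₀ (by positivity)]
                linarith [hCbk]
        · rw [hfx]
          show (k:ℝ) • (δ + ((k:ℝ))⁻¹ • w) = (k:ℝ) • δ + w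
          rw [smul_add, smul_inv_smul₀ hk0']
    have htendv := tendsto_measure_cthickening_of_isCompact (μ := volume) hΔcompact
    have htdiv : Tendsto (fun ε => volume (Metric.cthickening ε Δ) / ENNReal.ofReal |M.det|)
        (nhdsWithin (0:ℝ) (Set.Ioi 0)) (𝓝 (volume Δ / ENNReal.ofReal |M.det|)) := by
      apply Tendsto.mono_left ?_ nhdsWithin_le_nhds
      simp only [div_eq_mul_inv]
      exact ENNReal.Tendsto.mul_const htendv (Or.inr (ENNReal.inv_ne_top.2 hdet'))
    apply ge_of_tendsto htdiv
    filter_upwards [self_mem_nhdsWithin] with ε hε using hstep ε hε
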